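/- Let φ: K → M be a strong covering of finite simplicial complexes (with combinatorial weights w ≡ 1). Then the i-th Betti number of K is at least the i-th Betti number of M: dim H̃^i(K, ℝ) ≥ dim H̃^i(M, ℝ) for all i. -/

import Mathlib

open Finset

variable {V : Type*} {W : Type*}

/-- An abstract simplicial complex: a collection of finite subsets of `V`
closed under taking subsets. -/
def IsComplex [DecidableEq V] (K : Finset (Finset V)) : Prop :=
  ∀ F ∈ K, ∀ G, G ⊆ F → G ∈ K

/-- The 1-skeleton graph of a complex. -/
def oneSkeleton [DecidableEq V] (K : Finset (Finset V)) : SimpleGraph V where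
  Adj u v := u ≠ v ∧ ({u, v} : Finset V) ∈ K
  symm := ⟨fun u v h => ⟨h.1.symm, by rw [Finset.pair_comm]; exact h.2⟩⟩
  loopless := ⟨fun u h => h.1 rfl⟩

/-- A strong covering of simplicial complexes `φ : K → M`:
`K` is a connected complex, `φ` is simplicial, the preimage of each face of `M`
is a disjoint union of faces of `K` each mapped bijectively onto it, and
incidences lift: whenever `G ∈ ∂ Gb` in `M` and `F ∈ φ⁻¹(G)`, there is
`Fb` of `K` with `F ∈ ∂ Fb` and `φ(Fb) = Gb`. -/
structure StrongCovering [DecidableEq V] [DecidableEq W]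
    (K : Finset (Finset V)) (M : Finset (Finset W)) (φ : V → W) : Prop where
  complexK : IsComplex K
  complexM : IsComplex M
  nonemptyK : K.Nonempty
  connectedK : ∀ u v : V, {u} ∈ K → {v} ∈ K → (oneSkeleton K).Reachable u v
  simplicial : ∀ F ∈ K, F.image φ ∈ M
  injOn : ∀ F ∈ K, Set.InjOn φ (F : Set V)
  disjointFibers : ∀ F ∈ K, ∀ F' ∈ K, F.image φ = F'.image φ → F ≠ F' → Disjoint F F'
  surjFaces : ∀ G ∈ M, ∃ F ∈ K, F.image φ = G
  strong : ∀ G ∈ M, ∀ Gb ∈ M, G ⊆ Gb → Gb.card = G.card + 1 →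
    ∀ F ∈ K, F.image φ = G → ∃ Fb ∈ K, F ⊆ Fb ∧ Fb.card = F.card + 1 ∧ Fb.image φ = Gb

/-- The canonical boundary sign `sgn([F], ∂[Fb])` with respect to the
orientations induced by the linear order on the vertices: it is `(−1)^j` if `F`
is obtained from `Fb` by deleting its `j`-th smallest vertex, and `0` if
`F ∉ ∂ Fb`. -/
def sgnBd [LinearOrder V] (F Fb : Finset V) : ℝ :=
  if F ⊆ Fb ∧ Fb.card = F.card + 1 then
    (-1 : ℝ) ^ (∑ v ∈ Fb \ F, (F.filter (· < v)).card)
  else 0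

/-- The matrix of the `i`-up Laplace operator
`L_i^up = W_i⁻¹ D_iᵀ W_{i+1} D_i` of a weighted complex `K`, with rows and
columns indexed by the `i`-faces of `K`. -/
noncomputable def lapUp [Fintype V] [LinearOrder V]
    (K : Finset (Finset V)) (w : Finset V → ℝ) (i : ℕ) :
    Matrix {F : Finset V // F ∈ K ∧ F.card = i + 1}
      {F : Finset V // F ∈ K ∧ F.card = i + 1} ℝ :=
  fun F F' => (w F.1)⁻¹ *
    ∑ Fb : {B : Finset V // B ∈ K ∧ B.card = i + 2},
      w Fb.1 * sgnBd F.1 Fb.1 * sgnBd F'.1 Fb.1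

/-- The matrix of the `i`-up Laplace operator of an incidence-signed complex
`(K, s)`: `L_i^up(K,s) = W_i⁻¹ (D_i^s)ᵀ W_{i+1} D_i^s` where
`(D_i^s)_{Fb,F} = sgn([F], ∂[Fb]) s(F, Fb)`. -/
noncomputable def lapUpSigned [Fintype V] [LinearOrder V]
    (K : Finset (Finset V)) (w : Finset V → ℝ)
    (s : Finset V → Finset V → ℝ) (i : ℕ) :
    Matrix {F : Finset V // F ∈ K ∧ F.card = i + 1}
      {F : Finset V // F ∈ K ∧ F.card = i + 1} ℝ :=
  fun F F' => (w F.1)⁻¹ *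
    ∑ Fb : {B : Finset V // B ∈ K ∧ B.card = i + 2},
      w Fb.1 * (sgnBd F.1 Fb.1 * s F.1 Fb.1) * (sgnBd F'.1 Fb.1 * s F'.1 Fb.1)

/-- The matrix of the `i`-down Laplace operator
`L_i^down = D_{i-1} W_{i-1}⁻¹ D_{i-1}ᵀ W_i` of a weighted complex `K`
(the `(i-1)`-faces have cardinality `i`; for `i = 0` this is the empty
simplex, giving the augmented/reduced version). -/
noncomputable def lapDown [Fintype V] [LinearOrder V]
    (K : Finset (Finset V)) (w : Finset V → ℝ) (i : ℕ) :
    Matrix {F : Finset V // F ∈ K ∧ F.card = i + 1}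
      {F : Finset V // F ∈ K ∧ F.card = i + 1} ℝ :=
  fun F F' =>
    (∑ H : {H : Finset V // H ∈ K ∧ H.card = i},
      sgnBd H.1 F.1 * (w H.1)⁻¹ * sgnBd H.1 F'.1) * w F'.1

/-- The sign `sgn([F], [φ(F)])` comparing the canonical orientation of a face
`F` with the orientation its image `φ(F)` inherits from `φ`: it is the sign of
the permutation sorting the `φ`-image of the sorted vertex list of `F`,
computed as the parity of the number of inversions. -/
def sgnMap {W : Type*} [LinearOrder V] [LinearOrder W] (φ : V → W) (F : Finset V) : ℝ :=
  (-1 : ℝ) ^ ((F ×ˢ F).filter fun p => p.1 < p.2 ∧ φ p.2 < φ p.1).card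


section BettiAux

lemma neg_one_pow_congr' {m n : ℕ} (h : m % 2 = n % 2) : (-1 : ℝ) ^ m = (-1) ^ n := by
  rw [neg_one_pow_eq_pow_mod_two, h, ← neg_one_pow_eq_pow_mod_two]

lemma sgnMap_mul_self {V W : Type*} [LinearOrder V] [LinearOrder W] (φ : V → W)
    (F : Finset V) : sgnMap φ F * sgnMap φ F = 1 := by
  rw [sgnMap, ← pow_add]
  exact Even.neg_one_pow ⟨_, rfl⟩

lemma sgnMap_ne_zero {V W : Type*} [LinearOrder V] [LinearOrder W] (φ : V → W)
    (F : Finset V) : sgnMap φ F ≠ 0 := by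
  rw [sgnMap]
  exact pow_ne_zero _ (by norm_num)

lemma card_filter_insert_prod {V : Type*} [DecidableEq V] (H : Finset V) (v : V)
    (hv : v ∉ H) (P : V × V → Prop) [DecidablePred P] (hPvv : ¬ P (v, v)) :
    ((insert v H ×ˢ insert v H).filter P).card
      = ((H ×ˢ H).filter P).card + (H.filter fun b => P (v, b)).card
        + (H.filter fun a => P (a, v)).card := by
  rw [card_filter, card_filter, card_filter, card_filter, Finset.sum_product,
    Finset.sum_insert hv]
  rw [Finset.sum_insert hv, if_neg hPvv]
  have : ∀ a ∈ H, (∑ b ∈ insert v H, if P (a, b) then 1 else 0)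
      = (if P (a, v) then 1 else 0) + ∑ b ∈ H, if P (a, b) then 1 else 0 := by
    intro a _; rw [Finset.sum_insert hv]
  rw [Finset.sum_congr rfl this, Finset.sum_add_distrib, Finset.sum_product]
  ring

lemma sgn_identity {V W : Type*} [LinearOrder V] [LinearOrder W] (φ : V → W)
    (H F : Finset V) (hHF : H ⊆ F) (hcard : F.card = H.card + 1)
    (hinj : Set.InjOn φ F) :
    sgnBd (H.image φ) (F.image φ) = sgnBd H F * sgnMap φ H * sgnMap φ F := by
  have hsd : (F \ H).card = 1 := by
    rw [card_sdiff_of_subset hHF, hcard]; omega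
  obtain ⟨v, hv⟩ := Finset.card_eq_one.mp hsd
  have hvF : v ∈ F := (Finset.mem_sdiff.mp (hv ▸ Finset.mem_singleton_self v)).1
  have hvH : v ∉ H := (Finset.mem_sdiff.mp (hv ▸ Finset.mem_singleton_self v)).2
  have hFins : F = insert v H := by
    apply Finset.eq_of_subset_of_card_le
    · intro x hx
      by_cases hxH : x ∈ H
      · exact Finset.mem_insert_of_mem hxH
      · have : x ∈ F \ H := Finset.mem_sdiff.mpr ⟨hx, hxH⟩
        rw [hv, Finset.mem_singleton] at this
        exact this ▸ Finset.mem_insert_self v H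
    · rw [Finset.card_insert_of_notMem hvH, hcard]
  have hinjH : Set.InjOn φ H := hinj.mono (by exact_mod_cast hHF)
  have hφne : ∀ h ∈ H, φ h ≠ φ v := by
    intro h hh heq
    exact hvH ((hinj (hHF hh) hvF heq) ▸ hh)
  have hφvH : φ v ∉ H.image φ := by
    simp only [Finset.mem_image, not_exists]
    intro h hh
    exact hφne h hh.1 hh.2
  set A1 := (H.filter fun h => h < v ∧ φ h < φ v).card with hA1
  set A2 := (H.filter fun h => h < v ∧ φ v < φ h).card with hA2
  set B1 := (H.filter fun h => v < h ∧ φ h < φ v).card with hB1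
  set I := ((H ×ˢ H).filter fun p => p.1 < p.2 ∧ φ p.2 < φ p.1).card with hI
  have himg : F.image φ = insert (φ v) (H.image φ) := by
    rw [hFins, Finset.image_insert]
  have hcardHφ : (H.image φ).card = H.card := Finset.card_image_of_injOn hinjH
  have hcardFφ : (F.image φ).card = F.card := Finset.card_image_of_injOn hinj
  have hLcond : H.image φ ⊆ F.image φ ∧ (F.image φ).card = (H.image φ).card + 1 := by
    constructor
    · exact Finset.image_subset_image hHF
    · rw [hcardHφ, hcardFφ, hcard]
  have hsdφ : F.image φ \ H.image φ = {φ v} := by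
    rw [himg]
    exact Finset.insert_sdiff_cancel hφvH
  have hfiltφ : ((H.image φ).filter (· < φ v)) = (H.filter fun h => φ h < φ v).image φ := by
    ext w
    simp only [Finset.mem_filter, Finset.mem_image]
    constructor
    · rintro ⟨⟨h, hh, rfl⟩, hlt⟩; exact ⟨h, ⟨hh, hlt⟩, rfl⟩
    · rintro ⟨h, ⟨hh, hlt⟩, rfl⟩; exact ⟨⟨h, hh, rfl⟩, hlt⟩
  have hLHS : sgnBd (H.image φ) (F.image φ) = (-1 : ℝ) ^ (A1 + B1) := by
    rw [sgnBd, if_pos hLcond, hsdφ, Finset.sum_singleton, hfiltφ,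
      Finset.card_image_of_injOn (hinjH.mono (by
        intro x hx; simp only [Finset.coe_filter, Set.mem_setOf_eq] at hx; exact hx.1))]
    congr 1
    have := Finset.card_filter_add_card_filter_not
      (s := H.filter fun h => φ h < φ v) (p := fun h => h < v)
    rw [Finset.filter_filter, Finset.filter_filter] at this
    have e1 : (H.filter fun h => φ h < φ v ∧ h < v) = H.filter fun h => h < v ∧ φ h < φ v := by
      apply Finset.filter_congr; intro h _; exact ⟨fun ⟨a, b⟩ => ⟨b, a⟩, fun ⟨a, b⟩ => ⟨b, a⟩⟩
    have e2 : (H.filter fun h => φ h < φ v ∧ ¬ h < v) = H.filter fun h => v < h ∧ φ h < φ v := by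
      apply Finset.filter_congr; intro h hh
      have hne : h ≠ v := fun e => hvH (e ▸ hh)
      constructor
      · rintro ⟨h1, h2⟩; exact ⟨lt_of_le_of_ne (not_lt.mp h2) (Ne.symm hne), h1⟩
      · rintro ⟨h1, h2⟩; exact ⟨h2, not_lt.mpr h1.le⟩
    rw [e1, e2] at this
    omega
  have hRcond : H ⊆ F ∧ F.card = H.card + 1 := ⟨hHF, hcard⟩
  have hsgnBd : sgnBd H F = (-1 : ℝ) ^ (A1 + A2) := by
    rw [sgnBd, if_pos hRcond, hv, Finset.sum_singleton]
    congr 1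
    have := Finset.card_filter_add_card_filter_not
      (s := H.filter fun h => h < v) (p := fun h => φ h < φ v)
    rw [Finset.filter_filter, Finset.filter_filter] at this
    have e2 : (H.filter fun h => h < v ∧ ¬ φ h < φ v) = H.filter fun h => h < v ∧ φ v < φ h := by
      apply Finset.filter_congr; intro h hh
      have hne : φ h ≠ φ v := hφne h hh
      constructor
      · rintro ⟨h1, h2⟩; exact ⟨h1, lt_of_le_of_ne (not_lt.mp h2) (Ne.symm hne)⟩
      · rintro ⟨h1, h2⟩; exact ⟨h1, not_lt.mpr h2.le⟩
    rw [e2] at this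
    omega
  have hinvF : sgnMap φ F = (-1 : ℝ) ^ (I + B1 + A2) := by
    rw [sgnMap, hFins]
    rw [card_filter_insert_prod H v hvH _ (by simp)]
  rw [hLHS, hsgnBd, hinvF, sgnMap, ← hI, ← pow_add, ← pow_add]
  apply neg_one_pow_congr'
  omega

lemma sgn_term_eq {V W : Type*} [LinearOrder V] [LinearOrder W] (φ : V → W)
    (H F : Finset V) (hHF : H ⊆ F) (hcard : F.card = H.card + 1)
    (hinj : Set.InjOn φ F) :
    sgnBd H F * sgnMap φ F = sgnMap φ H * sgnBd (H.image φ) (F.image φ) := by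
  rw [sgn_identity φ H F hHF hcard hinj]
  have h2 := sgnMap_mul_self φ H
  linear_combination (-(sgnBd H F * sgnMap φ F)) * h2

end BettiAux

section BettiKer

variable {V : Type*} [Fintype V] [LinearOrder V] (K : Finset (Finset V)) (i : ℕ)

/-- The up-coboundary of an `i`-cochain, evaluated at `(i+1)`-faces. -/
noncomputable def upVec (x : {F : Finset V // F ∈ K ∧ F.card = i + 1} → ℝ)
    (Fb : {B : Finset V // B ∈ K ∧ B.card = i + 2}) : ℝ :=
  ∑ F, sgnBd F.1 Fb.1 * x F

/-- The down-boundary of an `i`-cochain, evaluated at `(i-1)`-faces. -/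
noncomputable def downVec (x : {F : Finset V // F ∈ K ∧ F.card = i + 1} → ℝ)
    (H : {H : Finset V // H ∈ K ∧ H.card = i}) : ℝ :=
  ∑ F, sgnBd H.1 F.1 * x F

lemma lapUp_mulVec (x : {F : Finset V // F ∈ K ∧ F.card = i + 1} → ℝ)
    (F : {F : Finset V // F ∈ K ∧ F.card = i + 1}) :
    (lapUp K (fun _ => 1) i).mulVec x F = ∑ Fb, sgnBd F.1 Fb.1 * upVec K i x Fb := by
  unfold Matrix.mulVec dotProduct lapUp upVec
  simp only [one_mul, inv_one, Finset.sum_mul, Finset.mul_sum]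
  rw [Finset.sum_comm]
  exact Finset.sum_congr rfl fun Fb _ => Finset.sum_congr rfl fun F' _ => by ring

lemma lapDown_mulVec (x : {F : Finset V // F ∈ K ∧ F.card = i + 1} → ℝ)
    (F : {F : Finset V // F ∈ K ∧ F.card = i + 1}) :
    (lapDown K (fun _ => 1) i).mulVec x F = ∑ H, sgnBd H.1 F.1 * downVec K i x H := by
  unfold Matrix.mulVec dotProduct lapDown downVec
  simp only [one_mul, mul_one, inv_one, Finset.sum_mul, Finset.mul_sum]
  rw [Finset.sum_comm]
  exact Finset.sum_congr rfl fun H _ => Finset.sum_congr rfl fun F' _ => by ring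

lemma mem_ker_iff (x : {F : Finset V // F ∈ K ∧ F.card = i + 1} → ℝ) :
    x ∈ LinearMap.ker ((lapUp K (fun _ => 1) i + lapDown K (fun _ => 1) i).mulVecLin)
      ↔ (∀ Fb, upVec K i x Fb = 0) ∧ (∀ H, downVec K i x H = 0) := by
  rw [LinearMap.mem_ker, Matrix.mulVecLin_apply, Matrix.add_mulVec]
  constructor
  · intro h
    have hdot : (∑ Fb, (upVec K i x Fb) ^ 2) + (∑ H, (downVec K i x H) ^ 2) = 0 := by
      have : ∑ F, x F * ((lapUp K (fun _ => 1) i).mulVec x F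
          + (lapDown K (fun _ => 1) i).mulVec x F) = 0 := by
        apply Finset.sum_eq_zero
        intro F _
        have := congrFun h F
        simp only [Pi.add_apply, Pi.zero_apply] at this
        rw [this, mul_zero]
      rw [← this]
      simp only [lapUp_mulVec, lapDown_mulVec, mul_add, Finset.sum_add_distrib,
        Finset.mul_sum]
      congr 1
      · rw [Finset.sum_comm]
        apply Finset.sum_congr rfl
        intro Fb _
        unfold upVec
        rw [sq, Finset.sum_mul]
        exact Finset.sum_congr rfl fun F _ => by ring
      · rw [Finset.sum_comm]
        apply Finset.sum_congr rfl
        intro H _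
        unfold downVec
        rw [sq, Finset.sum_mul]
        exact Finset.sum_congr rfl fun F _ => by ring
    have n1 : (0:ℝ) ≤ ∑ Fb, (upVec K i x Fb) ^ 2 :=
      Finset.sum_nonneg fun Fb _ => sq_nonneg _
    have n2 : (0:ℝ) ≤ ∑ H, (downVec K i x H) ^ 2 :=
      Finset.sum_nonneg fun H _ => sq_nonneg _
    have hup0 : ∑ Fb, (upVec K i x Fb) ^ 2 = 0 := by linarith
    have hdown0 : ∑ H, (downVec K i x H) ^ 2 = 0 := by linarith
    constructor
    · intro Fb
      have := (Finset.sum_eq_zero_iff_of_nonneg (fun Fb _ => sq_nonneg _)).mp hup0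
        Fb (Finset.mem_univ _)
      exact pow_eq_zero_iff (by norm_num) |>.mp this
    · intro H
      have := (Finset.sum_eq_zero_iff_of_nonneg (fun H _ => sq_nonneg _)).mp hdown0
        H (Finset.mem_univ _)
      exact pow_eq_zero_iff (by norm_num) |>.mp this
  · intro ⟨h1, h2⟩
    funext F
    simp only [Pi.add_apply, Pi.zero_apply, lapUp_mulVec, lapDown_mulVec]
    rw [Finset.sum_eq_zero fun Fb _ => by rw [h1 Fb, mul_zero],
      Finset.sum_eq_zero fun H _ => by rw [h2 H, mul_zero], add_zero]

end BettiKer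

section BettiCover

variable {V : Type*} {W : Type*} [Fintype V] [LinearOrder V] [Fintype W] [LinearOrder W]

/-- Extend a cochain on the `i`-faces of `M` by zero to all finsets. -/
noncomputable def extFace (M : Finset (Finset W)) (i : ℕ)
    (f : {G : Finset W // G ∈ M ∧ G.card = i + 1} → ℝ) (G : Finset W) : ℝ :=
  if h : G ∈ M ∧ G.card = i + 1 then f ⟨G, h⟩ else 0

lemma extFace_coe (M : Finset (Finset W)) (i : ℕ)
    (f : {G : Finset W // G ∈ M ∧ G.card = i + 1} → ℝ)
    (G : {G : Finset W // G ∈ M ∧ G.card = i + 1}) : f G = extFace M i f G.1 := by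
  rw [extFace, dif_pos G.2]

/-- The sign-twisted lift of cochains along `φ`. -/
noncomputable def liftL (K : Finset (Finset V)) (M : Finset (Finset W)) (φ : V → W) (i : ℕ) :
    ({G : Finset W // G ∈ M ∧ G.card = i + 1} → ℝ) →ₗ[ℝ]
    ({F : Finset V // F ∈ K ∧ F.card = i + 1} → ℝ) where
  toFun f F := sgnMap φ F.1 * extFace M i f (F.1.image φ)
  map_add' f g := by
    funext F
    unfold extFace
    by_cases h : F.1.image φ ∈ M ∧ (F.1.image φ).card = i + 1 <;> simp [h] <;> ring
  map_smul' c f := by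
    funext F
    unfold extFace
    by_cases h : F.1.image φ ∈ M ∧ (F.1.image φ).card = i + 1 <;> simp [h] <;> ring

lemma sum_faces {α : Type*} [DecidableEq α] [Fintype α] (S : Finset (Finset α)) (c : ℕ)
    (g : Finset α → ℝ) :
    ∑ F : {F : Finset α // F ∈ S ∧ F.card = c}, g F.1
      = ∑ F ∈ S.filter (fun F => F.card = c), g F :=
  (Finset.sum_subtype _ (fun F => by simp [Finset.mem_filter]) g).symm

lemma image_injOn_subsets {α β : Type*} [DecidableEq α] [DecidableEq β] {φ : α → β}
    {S : Finset α} (hinj : Set.InjOn φ S) {F1 F2 : Finset α}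
    (h1 : F1 ⊆ S) (h2 : F2 ⊆ S) (heq : F1.image φ = F2.image φ) : F1 = F2 := by
  ext x
  constructor
  · intro hx
    have : φ x ∈ F2.image φ := heq ▸ Finset.mem_image_of_mem φ hx
    obtain ⟨y, hy, hyx⟩ := Finset.mem_image.mp this
    rwa [← hinj (h2 hy) (h1 hx) hyx]
  · intro hx
    have : φ x ∈ F1.image φ := heq.symm ▸ Finset.mem_image_of_mem φ hx
    obtain ⟨y, hy, hyx⟩ := Finset.mem_image.mp this
    rwa [← hinj (h1 hy) (h2 hx) hyx]

lemma image_filter_preimage {α β : Type*} [DecidableEq α] [DecidableEq β] {φ : α → β}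
    {S : Finset α} {G : Finset β} (hG : G ⊆ S.image φ) :
    (S.filter (fun v => φ v ∈ G)).image φ = G := by
  ext w
  simp only [Finset.mem_image, Finset.mem_filter]
  constructor
  · rintro ⟨v, ⟨_, hvG⟩, rfl⟩; exact hvG
  · intro hw
    obtain ⟨v, hvS, rfl⟩ := Finset.mem_image.mp (hG hw)
    exact ⟨v, ⟨hvS, hw⟩, rfl⟩

variable {K : Finset (Finset V)} {M : Finset (Finset W)} {φ : V → W}

lemma image_card_eq (hc : StrongCovering K M φ) (F : Finset V) (hF : F ∈ K) :
    (F.image φ).card = F.card :=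
  Finset.card_image_of_injOn (hc.injOn F hF)

/-- The up transfer: the up-coboundary of a lift is the sign-twisted lift of
the up-coboundary. -/
lemma upVec_lift (hc : StrongCovering K M φ) (i : ℕ)
    (f : {G : Finset W // G ∈ M ∧ G.card = i + 1} → ℝ)
    (Fb : {B : Finset V // B ∈ K ∧ B.card = i + 2}) :
    upVec K i (liftL K M φ i f) Fb
      = sgnMap φ Fb.1 * upVec M i f ⟨Fb.1.image φ, hc.simplicial _ Fb.2.1,
          by rw [image_card_eq hc _ Fb.2.1, Fb.2.2]⟩ := by
  obtain ⟨Fb, hFbK, hFbc⟩ := Fb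
  have hinjFb : Set.InjOn φ Fb := hc.injOn Fb hFbK
  have hGbM : Fb.image φ ∈ M := hc.simplicial _ hFbK
  have hKside : upVec K i (liftL K M φ i f) ⟨Fb, hFbK, hFbc⟩
      = ∑ F ∈ Fb.powersetCard (i+1),
          sgnBd F Fb * (sgnMap φ F * extFace M i f (F.image φ)) := by
    rw [upVec]
    simp only [liftL, LinearMap.coe_mk, AddHom.coe_mk]
    rw [sum_faces K (i+1) (fun F => sgnBd F Fb * (sgnMap φ F * extFace M i f (F.image φ)))]
    symm
    apply Finset.sum_subset
    · intro F hF
      rw [Finset.mem_powersetCard] at hF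
      rw [Finset.mem_filter]
      exact ⟨hc.complexK _ hFbK F hF.1, hF.2⟩
    · intro F hF hnF
      rw [Finset.mem_filter] at hF
      have hns : ¬ F ⊆ Fb := fun hsub => hnF (Finset.mem_powersetCard.mpr ⟨hsub, hF.2⟩)
      rw [sgnBd, if_neg (fun hcond => hns hcond.1), zero_mul]
  have hMside : upVec M i f ⟨Fb.image φ, hGbM, by rw [image_card_eq hc _ hFbK, hFbc]⟩
      = ∑ G ∈ (Fb.image φ).powersetCard (i+1),
          sgnBd G (Fb.image φ) * extFace M i f G := by
    rw [upVec]
    calc (∑ G : {G : Finset W // G ∈ M ∧ G.card = i + 1}, sgnBd G.1 (Fb.image φ) * f G)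
        = ∑ G : {G : Finset W // G ∈ M ∧ G.card = i + 1},
            sgnBd G.1 (Fb.image φ) * extFace M i f G.1 :=
          Finset.sum_congr rfl fun G _ => by rw [← extFace_coe]
      _ = ∑ G ∈ M.filter (fun G => G.card = i + 1),
            sgnBd G (Fb.image φ) * extFace M i f G :=
          sum_faces M (i+1) (fun G => sgnBd G (Fb.image φ) * extFace M i f G)
      _ = ∑ G ∈ (Fb.image φ).powersetCard (i+1),
            sgnBd G (Fb.image φ) * extFace M i f G := by
          symm
          apply Finset.sum_subset
          · intro G hG
            rw [Finset.mem_powersetCard] at hG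
            rw [Finset.mem_filter]
            exact ⟨hc.complexM _ hGbM G hG.1, hG.2⟩
          · intro G hG hnG
            rw [Finset.mem_filter] at hG
            have hns : ¬ G ⊆ Fb.image φ :=
              fun hsub => hnG (Finset.mem_powersetCard.mpr ⟨hsub, hG.2⟩)
            rw [sgnBd, if_neg (fun hcond => hns hcond.1), zero_mul]
  rw [hKside, hMside, Finset.mul_sum]
  apply Finset.sum_bij (i := fun F _ => F.image φ)
  · intro F hF
    rw [Finset.mem_powersetCard] at hF ⊢
    refine ⟨Finset.image_subset_image hF.1, ?_⟩
    rw [Finset.card_image_of_injOn (hinjFb.mono (by exact_mod_cast hF.1)), hF.2]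
  · intro F1 h1 F2 h2 heq
    rw [Finset.mem_powersetCard] at h1 h2
    exact image_injOn_subsets hinjFb h1.1 h2.1 heq
  · intro G hG
    rw [Finset.mem_powersetCard] at hG
    have himg : (Fb.filter (fun v => φ v ∈ G)).image φ = G := image_filter_preimage hG.1
    refine ⟨Fb.filter (fun v => φ v ∈ G), Finset.mem_powersetCard.mpr
      ⟨Finset.filter_subset _ _, ?_⟩, himg⟩
    have hci : ((Fb.filter (fun v => φ v ∈ G)).image φ).card
        = (Fb.filter (fun v => φ v ∈ G)).card :=
      Finset.card_image_of_injOn (hinjFb.mono (by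
        intro x hx
        exact Finset.mem_coe.mpr
          (Finset.filter_subset (fun v => φ v ∈ G) Fb (Finset.mem_coe.mp hx))))
    rw [← hci, himg, hG.2]
  · intro F hF
    rw [Finset.mem_powersetCard] at hF
    have hid := sgn_identity φ F Fb hF.1 (by rw [hFbc, hF.2]) hinjFb
    have h2 := sgnMap_mul_self φ Fb
    linear_combination (-(sgnMap φ Fb * extFace M i f (F.image φ))) * hid
      + (-(sgnBd F Fb * sgnMap φ F * extFace M i f (F.image φ))) * h2

/-- The down transfer at a nonempty face. -/
lemma downVec_lift (hc : StrongCovering K M φ) (i : ℕ)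
    (f : {G : Finset W // G ∈ M ∧ G.card = i + 1} → ℝ)
    (H : {H : Finset V // H ∈ K ∧ H.card = i}) (hne : H.1.Nonempty) :
    downVec K i (liftL K M φ i f) H
      = sgnMap φ H.1 * downVec M i f ⟨H.1.image φ, hc.simplicial _ H.2.1,
          by rw [image_card_eq hc _ H.2.1, H.2.2]⟩ := by
  obtain ⟨H, hHK, hHc⟩ := H
  have hGHM : H.image φ ∈ M := hc.simplicial _ hHK
  have hGHc : (H.image φ).card = H.card := image_card_eq hc _ hHK
  have hKside : downVec K i (liftL K M φ i f) ⟨H, hHK, hHc⟩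
      = ∑ F ∈ (K.filter (fun F => F.card = i + 1)).filter (fun F => H ⊆ F),
          sgnBd H F * (sgnMap φ F * extFace M i f (F.image φ)) := by
    rw [downVec]
    simp only [liftL, LinearMap.coe_mk, AddHom.coe_mk]
    rw [sum_faces K (i+1) (fun F => sgnBd H F * (sgnMap φ F * extFace M i f (F.image φ)))]
    symm
    apply Finset.sum_subset (Finset.filter_subset _ _)
    intro F hF hnF
    have hns : ¬ H ⊆ F := fun hsub => hnF (Finset.mem_filter.mpr ⟨hF, hsub⟩)
    rw [sgnBd, if_neg (fun hcond => hns hcond.1), zero_mul]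
  have hMside : downVec M i f ⟨H.image φ, hGHM, by rw [hGHc, hHc]⟩
      = ∑ G ∈ (M.filter (fun G => G.card = i + 1)).filter (fun G => H.image φ ⊆ G),
          sgnBd (H.image φ) G * extFace M i f G := by
    rw [downVec]
    calc (∑ G : {G : Finset W // G ∈ M ∧ G.card = i + 1}, sgnBd (H.image φ) G.1 * f G)
        = ∑ G : {G : Finset W // G ∈ M ∧ G.card = i + 1},
            sgnBd (H.image φ) G.1 * extFace M i f G.1 :=
          Finset.sum_congr rfl fun G _ => by rw [← extFace_coe]
      _ = ∑ G ∈ M.filter (fun G => G.card = i + 1),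
            sgnBd (H.image φ) G * extFace M i f G :=
          sum_faces M (i+1) (fun G => sgnBd (H.image φ) G * extFace M i f G)
      _ = ∑ G ∈ (M.filter (fun G => G.card = i + 1)).filter (fun G => H.image φ ⊆ G),
            sgnBd (H.image φ) G * extFace M i f G := by
          symm
          apply Finset.sum_subset (Finset.filter_subset _ _)
          intro G hG hnG
          have hns : ¬ H.image φ ⊆ G := fun hsub => hnG (Finset.mem_filter.mpr ⟨hG, hsub⟩)
          rw [sgnBd, if_neg (fun hcond => hns hcond.1), zero_mul]
  rw [hKside, hMside, Finset.mul_sum]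
  apply Finset.sum_bij (i := fun F _ => F.image φ)
  · intro F hF
    simp only [Finset.mem_filter] at hF ⊢
    exact ⟨⟨hc.simplicial _ hF.1.1, by rw [image_card_eq hc _ hF.1.1, hF.1.2]⟩,
      Finset.image_subset_image hF.2⟩
  · intro F1 h1 F2 h2 heq
    simp only [Finset.mem_filter] at h1 h2
    by_contra hne12
    have hdisj := hc.disjointFibers F1 h1.1.1 F2 h2.1.1 heq hne12
    obtain ⟨x, hx⟩ := hne
    exact (Finset.disjoint_left.mp hdisj (h1.2 hx)) (h2.2 hx)
  · intro G hG
    simp only [Finset.mem_filter] at hG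
    obtain ⟨Fb, hFbK, hHFb, hFbc, hFbimg⟩ := hc.strong (H.image φ) hGHM G hG.1.1 hG.2
      (by rw [hG.1.2, hGHc, hHc]) H hHK rfl
    exact ⟨Fb, Finset.mem_filter.mpr ⟨Finset.mem_filter.mpr
      ⟨hFbK, by rw [hFbc, hHc]⟩, hHFb⟩, hFbimg⟩
  · intro F hF
    simp only [Finset.mem_filter] at hF
    have hid := sgn_term_eq φ H F hF.2 (by rw [hF.1.2, hHc]) (hc.injOn F hF.1.1)
    linear_combination (extFace M i f (F.image φ)) * hid

end BettiCover

section BettiFiber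

variable {V : Type*} {W : Type*} [Fintype V] [LinearOrder V] [Fintype W] [LinearOrder W]

/-- The fiber of `φ` over a vertex `w`, as a set of vertices of `K`. -/
def fibV (K : Finset (Finset V)) (φ : V → W) (w : W) : Finset V :=
  Finset.univ.filter fun v => ({v} : Finset V) ∈ K ∧ φ v = w

variable {K : Finset (Finset V)} {M : Finset (Finset W)} {φ : V → W}

lemma fib_card_le (hc : StrongCovering K M φ) {u u' : V} (hne : u ≠ u')
    (he : ({u, u'} : Finset V) ∈ K) :
    (fibV K φ (φ u)).card ≤ (fibV K φ (φ u')).card := by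
  have humem : u ∈ ({u, u'} : Finset V) := by simp
  have hu'mem : u' ∈ ({u, u'} : Finset V) := by simp
  have hφne : φ u ≠ φ u' := fun h => hne (hc.injOn _ he humem hu'mem h)
  have hpair : (({u, u'} : Finset V).image φ) = {φ u, φ u'} := by
    rw [Finset.image_insert, Finset.image_singleton]
  have hGbm : ({φ u, φ u'} : Finset W) ∈ M := hpair ▸ hc.simplicial _ he
  have hGm : ({φ u} : Finset W) ∈ M :=
    hc.complexM _ hGbm {φ u} (by intro x hx; simp only [Finset.mem_singleton] at hx; simp [hx])
  have hGbc : ({φ u, φ u'} : Finset W).card = 2 := by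
    rw [Finset.card_insert_of_notMem (by simp [hφne]), Finset.card_singleton]
  have hex : ∀ v : V, ∃ v', v ∈ fibV K φ (φ u) →
      v' ∈ fibV K φ (φ u') ∧ v ≠ v' ∧ ({v, v'} : Finset V) ∈ K ∧
        ({v, v'} : Finset V).image φ = {φ u, φ u'} := by
    intro v
    by_cases hv : v ∈ fibV K φ (φ u)
    · rw [fibV, Finset.mem_filter] at hv
      obtain ⟨-, hvK, hvφ⟩ := hv
      obtain ⟨Fb, hFbK, hvFb, hFbc, hFbimg⟩ := hc.strong {φ u} hGm {φ u, φ u'} hGbm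
        (by intro x hx; simp only [Finset.mem_singleton] at hx; simp [hx])
        (by rw [hGbc, Finset.card_singleton]) {v} hvK
        (by rw [Finset.image_singleton, hvφ])
      have hvinFb : v ∈ Fb := hvFb (Finset.mem_singleton_self v)
      have hsd : (Fb \ {v}).card = 1 := by
        rw [Finset.card_sdiff_of_subset (by simpa using hvinFb), hFbc, Finset.card_singleton]
      obtain ⟨v', hv'⟩ := Finset.card_eq_one.mp hsd
      have hv'mem := hv' ▸ Finset.mem_singleton_self v'
      rw [Finset.mem_sdiff, Finset.mem_singleton] at hv'mem
      obtain ⟨hv'Fb, hv'ne⟩ := hv'mem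
      have hFbeq : Fb = {v, v'} := by
        symm
        apply Finset.eq_of_subset_of_card_le
        · intro x hx
          rcases Finset.mem_insert.mp hx with rfl | hx
          · exact hvinFb
          · exact (Finset.mem_singleton.mp hx) ▸ hv'Fb
        · have h2 : ({v, v'} : Finset V).card = 2 := by
            rw [Finset.card_insert_of_notMem (by simp [Ne.symm hv'ne]),
              Finset.card_singleton]
          rw [hFbc, h2, Finset.card_singleton]
      have hφv' : φ v' = φ u' := by
        have hmem : φ v' ∈ ({φ u, φ u'} : Finset W) :=
          hFbimg ▸ Finset.mem_image_of_mem φ hv'Fb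
        rcases Finset.mem_insert.mp hmem with h | h
        · exfalso
          apply hv'ne
          apply hc.injOn Fb hFbK hv'Fb hvinFb
          rw [h, hvφ]
        · exact Finset.mem_singleton.mp h
      refine ⟨v', fun _ => ⟨?_, Ne.symm hv'ne, hFbeq ▸ hFbK, hFbeq ▸ hFbimg⟩⟩
      rw [fibV, Finset.mem_filter]
      exact ⟨Finset.mem_univ _,
        hc.complexK Fb hFbK {v'} (by simpa using hv'Fb), hφv'⟩
    · exact ⟨v, fun h => absurd h hv⟩
  choose g hg using hex
  apply Finset.card_le_card_of_injOn g
  · intro v hv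
    exact (hg v hv).1
  · intro v1 h1 v2 h2 heq
    obtain ⟨p1a, p1b, p1c, p1d⟩ := hg v1 (Finset.mem_coe.mp h1)
    obtain ⟨p2a, p2b, p2c, p2d⟩ := hg v2 (Finset.mem_coe.mp h2)
    by_contra hne12
    have hEne : ({v1, g v1} : Finset V) ≠ {v2, g v2} := by
      intro h
      have hv1 : v1 ∈ ({v2, g v2} : Finset V) := h ▸ Finset.mem_insert_self _ _
      rcases Finset.mem_insert.mp hv1 with h' | h'
      · exact hne12 h'
      · rw [Finset.mem_singleton] at h'
        rw [← heq] at h'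
        exact p1b h'
    have hdisj := hc.disjointFibers _ p1c _ p2c (p1d.trans p2d.symm) hEne
    have m1 : g v1 ∈ ({v1, g v1} : Finset V) := by simp
    have m2 : g v1 ∈ ({v2, g v2} : Finset V) := by rw [heq]; simp
    exact (Finset.disjoint_left.mp hdisj m1) m2

lemma fib_card_reach (hc : StrongCovering K M φ) {u v : V}
    (h : (oneSkeleton K).Reachable u v) :
    (fibV K φ (φ u)).card = (fibV K φ (φ v)).card := by
  obtain ⟨p⟩ := h
  induction p with
  | nil => rfl
  | cons hadj p ih =>
    have hne := (hadj : _ ∧ _).1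
    have hpK := (hadj : _ ∧ _).2
    have hstep := le_antisymm (fib_card_le hc hne hpK)
      (fib_card_le hc (Ne.symm hne) (by rwa [Finset.pair_comm]))
    exact hstep.trans ih

lemma fib_nonempty (hc : StrongCovering K M φ) (w : W) (hw : ({w} : Finset W) ∈ M) :
    (fibV K φ w).Nonempty := by
  obtain ⟨F, hFK, hFimg⟩ := hc.surjFaces {w} hw
  have hFne : F.Nonempty := by
    rw [← Finset.image_nonempty (f := φ), hFimg]
    exact Finset.singleton_nonempty w
  obtain ⟨v, hv⟩ := hFne
  refine ⟨v, ?_⟩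
  rw [fibV, Finset.mem_filter]
  refine ⟨Finset.mem_univ _, hc.complexK F hFK {v} (by simpa using hv), ?_⟩
  have : φ v ∈ F.image φ := Finset.mem_image_of_mem φ hv
  rw [hFimg, Finset.mem_singleton] at this
  exact this

lemma count_eq_fib (K : Finset (Finset V)) (φ : V → W) (w : W) :
    ((K.filter fun F => F.card = 0 + 1).filter (fun F => F.image φ = {w})).card
      = (fibV K φ w).card := by
  symm
  apply Finset.card_bij (i := fun v _ => ({v} : Finset V))
  · intro v hv
    rw [fibV, Finset.mem_filter] at hv
    simp only [Finset.mem_filter]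
    exact ⟨⟨hv.2.1, by simp⟩, by rw [Finset.image_singleton, hv.2.2]⟩
  · intro v1 _ v2 _ h
    exact Finset.singleton_inj.mp h
  · intro F hF
    simp only [Finset.mem_filter] at hF
    obtain ⟨⟨hFK, hFc⟩, hFimg⟩ := hF
    obtain ⟨v, rfl⟩ := Finset.card_eq_one.mp hFc
    refine ⟨v, ?_, rfl⟩
    rw [fibV, Finset.mem_filter]
    rw [Finset.image_singleton] at hFimg
    exact ⟨Finset.mem_univ _, hFK, Finset.singleton_inj.mp hFimg⟩

lemma count_const (hc : StrongCovering K M φ) :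
    ∀ G1 ∈ M.filter (fun G => G.card = 0 + 1), ∀ G2 ∈ M.filter (fun G => G.card = 0 + 1),
    ((K.filter fun F => F.card = 0 + 1).filter (fun F => F.image φ = G1)).card
      = ((K.filter fun F => F.card = 0 + 1).filter (fun F => F.image φ = G2)).card := by
  intro G1 hG1 G2 hG2
  rw [Finset.mem_filter] at hG1 hG2
  obtain ⟨w1, rfl⟩ := Finset.card_eq_one.mp hG1.2
  obtain ⟨w2, rfl⟩ := Finset.card_eq_one.mp hG2.2
  rw [count_eq_fib, count_eq_fib]
  obtain ⟨v1, hv1⟩ := fib_nonempty hc w1 hG1.1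
  obtain ⟨v2, hv2⟩ := fib_nonempty hc w2 hG2.1
  rw [fibV, Finset.mem_filter] at hv1 hv2
  have hreach := hc.connectedK v1 v2 hv1.2.1 hv2.2.1
  have := fib_card_reach hc hreach
  rwa [hv1.2.2, hv2.2.2] at this

lemma sgnBd_empty {α : Type*} [LinearOrder α] (F : Finset α) (h : F.card = 0 + 1) :
    sgnBd (∅ : Finset α) F = 1 := by
  rw [sgnBd, if_pos ⟨Finset.empty_subset F, by rw [h, Finset.card_empty]⟩]
  simp

lemma sgnMap_singleton {V W : Type*} [LinearOrder V] [LinearOrder W] (φ : V → W)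
    (F : Finset V) (h : F.card = 0 + 1) : sgnMap φ F = 1 := by
  obtain ⟨v, rfl⟩ := Finset.card_eq_one.mp h
  rw [sgnMap]
  have he : ((({v} : Finset V) ×ˢ {v}).filter fun p => p.1 < p.2 ∧ φ p.2 < φ p.1) = ∅ := by
    ext p
    simp only [Finset.mem_filter, Finset.mem_product, Finset.mem_singleton,
      Finset.notMem_empty, iff_false]
    rintro ⟨⟨rfl, h2⟩, h3, -⟩
    exact absurd (h2 ▸ h3) (lt_irrefl _)
  rw [he]
  simp

/-- The down transfer at the empty face (degree 0): uses constancy of the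
covering degree. -/
lemma downVec_lift_empty (hc : StrongCovering K M φ)
    (f : {G : Finset W // G ∈ M ∧ G.card = 0 + 1} → ℝ)
    (H : {H : Finset V // H ∈ K ∧ H.card = 0})
    (hd : ∀ Hm : {Hm : Finset W // Hm ∈ M ∧ Hm.card = 0}, downVec M 0 f Hm = 0) :
    downVec K 0 (liftL K M φ 0 f) H = 0 := by
  have h0M : (∅ : Finset W) ∈ M := by
    obtain ⟨F0, hF0⟩ := hc.nonemptyK
    exact hc.complexM _ (hc.simplicial F0 hF0) ∅ (Finset.empty_subset _)
  have hH0 : H.1 = ∅ := Finset.card_eq_zero.mp H.2.2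
  have hK : downVec K 0 (liftL K M φ 0 f) H
      = ∑ F ∈ K.filter (fun F => F.card = 0 + 1), extFace M 0 f (F.image φ) := by
    rw [downVec]
    simp only [liftL, LinearMap.coe_mk, AddHom.coe_mk]
    rw [sum_faces K (0+1) (fun F => sgnBd H.1 F * (sgnMap φ F * extFace M 0 f (F.image φ)))]
    apply Finset.sum_congr rfl
    intro F hF
    rw [Finset.mem_filter] at hF
    rw [hH0, sgnBd_empty _ hF.2, sgnMap_singleton φ _ hF.2, one_mul, one_mul]
  have hM : downVec M 0 f ⟨∅, h0M, Finset.card_empty⟩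
      = ∑ G ∈ M.filter (fun G => G.card = 0 + 1), extFace M 0 f G := by
    rw [downVec]
    calc (∑ G : {G : Finset W // G ∈ M ∧ G.card = 0 + 1}, sgnBd (∅ : Finset W) G.1 * f G)
        = ∑ G : {G : Finset W // G ∈ M ∧ G.card = 0 + 1}, extFace M 0 f G.1 :=
          Finset.sum_congr rfl fun G _ => by
            rw [sgnBd_empty _ G.2.2, one_mul, extFace_coe M 0 f G]
      _ = ∑ G ∈ M.filter (fun G => G.card = 0 + 1), extFace M 0 f G :=
          sum_faces M (0+1) (extFace M 0 f)
  have hmaps : ∀ F ∈ K.filter (fun F => F.card = 0 + 1),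
      F.image φ ∈ M.filter (fun G => G.card = 0 + 1) := by
    intro F hF
    rw [Finset.mem_filter] at hF ⊢
    exact ⟨hc.simplicial _ hF.1, by rw [image_card_eq hc _ hF.1, hF.2]⟩
  have hsplit : ∑ F ∈ K.filter (fun F => F.card = 0 + 1), extFace M 0 f (F.image φ)
      = ∑ G ∈ M.filter (fun G => G.card = 0 + 1),
          ∑ F ∈ (K.filter (fun F => F.card = 0 + 1)).filter (fun F => F.image φ = G),
            extFace M 0 f (F.image φ) :=
    (Finset.sum_fiberwise_of_maps_to hmaps _).symm
  rw [hK, hsplit]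
  have hinner : ∀ G ∈ M.filter (fun G => G.card = 0 + 1),
      (∑ F ∈ (K.filter (fun F => F.card = 0 + 1)).filter (fun F => F.image φ = G),
        extFace M 0 f (F.image φ))
      = (((K.filter (fun F => F.card = 0 + 1)).filter (fun F => F.image φ = G)).card : ℝ)
          * extFace M 0 f G := by
    intro G hG
    rw [Finset.sum_congr rfl (fun F hF => by rw [(Finset.mem_filter.mp hF).2]),
      Finset.sum_const, nsmul_eq_mul]
  rw [Finset.sum_congr rfl hinner]
  rcases Finset.eq_empty_or_nonempty (M.filter (fun G => G.card = 0 + 1)) with hMe | hMne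
  · rw [hMe, Finset.sum_empty]
  · obtain ⟨G0, hG0⟩ := hMne
    calc (∑ G ∈ M.filter (fun G => G.card = 0 + 1),
          (((K.filter (fun F => F.card = 0 + 1)).filter (fun F => F.image φ = G)).card : ℝ)
            * extFace M 0 f G)
        = ∑ G ∈ M.filter (fun G => G.card = 0 + 1),
          (((K.filter (fun F => F.card = 0 + 1)).filter (fun F => F.image φ = G0)).card : ℝ)
            * extFace M 0 f G :=
          Finset.sum_congr rfl fun G hG => by rw [count_const hc G hG G0 hG0]
      _ = (((K.filter (fun F => F.card = 0 + 1)).filter (fun F => F.image φ = G0)).card : ℝ)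
            * ∑ G ∈ M.filter (fun G => G.card = 0 + 1), extFace M 0 f G := by
          rw [Finset.mul_sum]
      _ = 0 := by rw [← hM, hd _, mul_zero]

end BettiFiber

section BettiMain

variable {V : Type*} {W : Type*} [Fintype V] [LinearOrder V] [Fintype W] [LinearOrder W]
variable {K : Finset (Finset V)} {M : Finset (Finset W)} {φ : V → W}

lemma lift_harmonic (hc : StrongCovering K M φ) (i : ℕ)
    (f : {G : Finset W // G ∈ M ∧ G.card = i + 1} → ℝ)
    (hf : f ∈ LinearMap.ker
      ((lapUp M (fun _ => 1) i + lapDown M (fun _ => 1) i).mulVecLin)) :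
    liftL K M φ i f ∈ LinearMap.ker
      ((lapUp K (fun _ => 1) i + lapDown K (fun _ => 1) i).mulVecLin) := by
  rw [mem_ker_iff] at hf ⊢
  obtain ⟨hu, hd⟩ := hf
  constructor
  · intro Fb
    rw [upVec_lift hc i f Fb, hu _, mul_zero]
  · intro H
    by_cases hne : H.1.Nonempty
    · rw [downVec_lift hc i f H hne, hd _, mul_zero]
    · have hH0 : H.1 = ∅ := Finset.not_nonempty_iff_eq_empty.mp hne
      have hi0 : i = 0 := by rw [← H.2.2, hH0, Finset.card_empty]
      subst hi0
      exact downVec_lift_empty hc f H hd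

lemma liftL_injective (hc : StrongCovering K M φ) (i : ℕ) :
    Function.Injective (liftL K M φ i) := by
  rw [← LinearMap.ker_eq_bot]
  rw [LinearMap.ker_eq_bot']
  intro f hf0
  funext G
  obtain ⟨F, hFK, hFimg⟩ := hc.surjFaces G.1 G.2.1
  have hFc : F.card = i + 1 := by
    rw [← image_card_eq hc F hFK, hFimg, G.2.2]
  have hzero := congrFun hf0 ⟨F, hFK, hFc⟩
  simp only [liftL, LinearMap.coe_mk, AddHom.coe_mk, Pi.zero_apply] at hzero
  have hext : extFace M i f (F.image φ) = 0 := by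
    rcases mul_eq_zero.mp hzero with h | h
    · exact absurd h (sgnMap_ne_zero φ F)
    · exact h
  calc f G = extFace M i f G.1 := extFace_coe M i f G
    _ = extFace M i f (F.image φ) := by rw [hFimg]
    _ = 0 := hext

end BettiMain

/-- for a strong covering `φ : K → M` (combinatorial weights
`w ≡ 1`), the `i`-th Betti number of `K` is at least that of `M`. By the
discrete Hodge theorem the `i`-th reduced cohomology is the kernel of the
combinatorial `i`-Laplace operator `L_i = L_i^up + L_i^down`, so the statement
reads: `dim ker L_i(M) ≤ dim ker L_i(K)`. -/
theorem betti_covering_ge [Fintype V] [LinearOrder V]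
    [Fintype W] [LinearOrder W]
    (K : Finset (Finset V)) (M : Finset (Finset W)) (φ : V → W)
    (hc : StrongCovering K M φ) (i : ℕ) :
    Module.finrank ℝ
        (LinearMap.ker ((lapUp M (fun _ => 1) i + lapDown M (fun _ => 1) i).mulVecLin))
      ≤ Module.finrank ℝ
        (LinearMap.ker ((lapUp K (fun _ => 1) i + lapDown K (fun _ => 1) i).mulVecLin)) := by
  classical
  let g : LinearMap.ker ((lapUp M (fun _ => 1) i + lapDown M (fun _ => 1) i).mulVecLin)
      →ₗ[ℝ] LinearMap.ker ((lapUp K (fun _ => 1) i + lapDown K (fun _ => 1) i).mulVecLin) :=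
    LinearMap.codRestrict _
      ((liftL K M φ i).comp (Submodule.subtype _))
      (fun c => lift_harmonic hc i c.1 c.2)
  apply LinearMap.finrank_le_finrank_of_injective (f := g)
  intro a b hab
  apply Subtype.ext
  apply liftL_injective hc i
  exact congrArg Subtype.val hab
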